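/- arXiv:1208.2871 — 4 statements merged into one kernel-verified Lean document; each statement's English description precedes it below -/
import Mathlib

section
/- Let c ∈ (0,1). The function f₃(r) = arctan( c·r / (1 − c·√(1−r²)) ) − arsinh( 2·c·r / (1−c²) ) is strictly decreasing on (0,1), with limit 0 as r → 0⁺ and limit arctan(c) − log((1+c)/(1−c)) as r → 1⁻; in particular f₃(r) < 0 for all r ∈ (0,1). -/
open Real Set Filter

lemma aux_P (c s : ℝ) (hc0 : 0 < c) (hcs : c < s) (hs1 : s < 1) :
    0 < 3*s^2 + 7*c^2*s^2 - 10*c*s^3 + 2*c*s - c^2 - c^4 := by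
  nlinarith [mul_pos (sub_pos.2 hcs) (sub_pos.2 hs1), sq_nonneg (s-c), sq_nonneg (1-s),
    mul_pos hc0 (sub_pos.2 hcs), sq_nonneg (1-c), mul_pos hc0 (mul_pos hc0 hc0),
    mul_pos (mul_pos hc0 hc0) (sub_pos.2 hs1), sq_nonneg (s*c-1), sq_nonneg (c+s)]

lemma aux_ineq (c r s W : ℝ) (hc0 : 0 < c) (hc1 : c < 1) (hr0 : 0 < r)
    (hs0 : 0 < s) (hs1 : s < 1) (hs2 : s ^ 2 = 1 - r ^ 2)
    (hW0 : 0 < W) (hW2 : W ^ 2 = (1 + c ^ 2) ^ 2 - (2 * c * s) ^ 2) :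
    1 / (1 + (c * r / (1 - c * s)) ^ 2) *
        ((c * (1 - c * s) - c * r * -(c * (-(2 * r) / (2 * s)))) / (1 - c * s) ^ 2)
      - (W / (1 - c ^ 2))⁻¹ * (2 * c / (1 - c ^ 2)) < 0 := by
  have hD : 0 < 1 - c * s := by nlinarith
  have h3 : 0 < 1 + c ^ 2 - 2 * c * s := by nlinarith
  have hc2 : 0 < 1 - c ^ 2 := by nlinarith
  have hr2 : r ^ 2 = 1 - s ^ 2 := by nlinarith
  have hT2 : (W / (1 - c ^ 2))⁻¹ * (2 * c / (1 - c ^ 2)) = 2 * c / W := by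
    field_simp
  have key : 1 / (1 + (c * r / (1 - c * s)) ^ 2) *
      ((c * (1 - c * s) - c * r * -(c * (-(2 * r) / (2 * s)))) / (1 - c * s) ^ 2)
      = c * (s - c) / (s * (1 + c ^ 2 - 2 * c * s)) := by
    have h4 : (1 - c * s) ^ 2 + c ^ 2 * r ^ 2 ≠ 0 := by positivity
    have h5 : 1 + c ^ 2 - 2 * c * s ≠ 0 := h3.ne'
    field_simp
    rw [eq_div_iff (by linarith)]
    linear_combination (-(c*(1+c^2-c*s*2) + c^2*(s-c))) * hr2
  rw [hT2, key, sub_neg, div_lt_div_iff₀ (by positivity) hW0]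
  rcases le_or_gt s c with h | h
  · nlinarith [mul_pos hW0 hc0, mul_pos (mul_pos hc0 hs0) h3]
  · have hP := aux_P c s hc0 h hs1
    have expand : (2 * c * (s * (1 + c ^ 2 - 2 * c * s))) ^ 2 - (c * (s - c) * W) ^ 2 =
        c ^ 2 * (1 + c ^ 2 - 2 * c * s) *
          (3*s^2 + 7*c^2*s^2 - 10*c*s^3 + 2*c*s - c^2 - c^4) := by
      linear_combination (-(c ^ 2 * (s - c) ^ 2)) * hW2
    have hb : (c * (s - c) * W) ^ 2 < (2 * c * (s * (1 + c ^ 2 - 2 * c * s))) ^ 2 := by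
      nlinarith [mul_pos (mul_pos (mul_pos hc0 hc0) h3) hP]
    exact lt_of_pow_lt_pow_left₀ 2 (by positivity) hb

lemma aux_deriv (c : ℝ) (hc0 : 0 < c) (hc1 : c < 1) (r : ℝ) (hr0 : 0 < r) (hr1 : r < 1) :
    HasDerivAt (fun x : ℝ => Real.arctan (c * x / (1 - c * Real.sqrt (1 - x ^ 2))) -
        Real.arsinh (2 * c * x / (1 - c ^ 2)))
      (1 / (1 + (c * r / (1 - c * Real.sqrt (1 - r ^ 2))) ^ 2) *
          ((c * (1 - c * Real.sqrt (1 - r ^ 2)) -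
            c * r * -(c * (-(2 * r) / (2 * Real.sqrt (1 - r ^ 2))))) /
            (1 - c * Real.sqrt (1 - r ^ 2)) ^ 2)
        - (Real.sqrt (1 + (2 * c * r / (1 - c ^ 2)) ^ 2))⁻¹ * (2 * c / (1 - c ^ 2))) r := by
  have h1r : (0:ℝ) < 1 - r ^ 2 := by nlinarith
  have hs0 : 0 < Real.sqrt (1 - r ^ 2) := Real.sqrt_pos.2 h1r
  have hs1 : Real.sqrt (1 - r ^ 2) ≤ 1 := by
    nlinarith [Real.sq_sqrt h1r.le, hs0]
  have hD : 0 < 1 - c * Real.sqrt (1 - r ^ 2) := by nlinarith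
  have hsq : HasDerivAt (fun x : ℝ => 1 - x ^ 2) (-(2 * r)) r := by
    simpa using ((hasDerivAt_pow 2 r).const_sub 1)
  have hsqrt : HasDerivAt (fun x : ℝ => Real.sqrt (1 - x ^ 2))
      (-(2 * r) / (2 * Real.sqrt (1 - r ^ 2))) r := hsq.sqrt h1r.ne'
  have hden : HasDerivAt (fun x : ℝ => 1 - c * Real.sqrt (1 - x ^ 2))
      (-(c * (-(2 * r) / (2 * Real.sqrt (1 - r ^ 2))))) r :=
    (hsqrt.const_mul c).const_sub 1
  have hnum : HasDerivAt (fun x : ℝ => c * x) c r := by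
    simpa using (hasDerivAt_id r).const_mul c
  have hu : HasDerivAt (fun x : ℝ => c * x / (1 - c * Real.sqrt (1 - x ^ 2)))
      ((c * (1 - c * Real.sqrt (1 - r ^ 2)) -
        c * r * -(c * (-(2 * r) / (2 * Real.sqrt (1 - r ^ 2))))) /
        (1 - c * Real.sqrt (1 - r ^ 2)) ^ 2) r := hnum.div hden hD.ne'
  have hv : HasDerivAt (fun x : ℝ => 2 * c * x / (1 - c ^ 2)) (2 * c / (1 - c ^ 2)) r := by
    simpa using ((hasDerivAt_id r).const_mul (2 * c)).div_const (1 - c ^ 2)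
  have h := hu.arctan.sub hv.arsinh
  simp only [smul_eq_mul] at h
  exact h

theorem stmt15 (c : ℝ) (hc : c ∈ Set.Ioo (0 : ℝ) 1) (f : ℝ → ℝ)
    (hf : ∀ r : ℝ, f r =
      Real.arctan (c * r / (1 - c * Real.sqrt (1 - r ^ 2))) -
        Real.arsinh (2 * c * r / (1 - c ^ 2))) :
    StrictAntiOn f (Set.Ioo 0 1) ∧
    Filter.Tendsto f (nhdsWithin 0 (Set.Ioi 0)) (nhds 0) ∧
    Filter.Tendsto f (nhdsWithin 1 (Set.Iio 1))
      (nhds (Real.arctan c - Real.log ((1 + c) / (1 - c)))) ∧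
    ∀ r ∈ Set.Ioo (0 : ℝ) 1, f r < 0 := by
  obtain ⟨hc0, hc1⟩ := hc
  have hfe : f = fun r : ℝ => Real.arctan (c * r / (1 - c * Real.sqrt (1 - r ^ 2))) -
      Real.arsinh (2 * c * r / (1 - c ^ 2)) := funext hf
  subst hfe
  have hc2 : 0 < 1 - c ^ 2 := by nlinarith
  have hdenpos : ∀ x : ℝ, 0 < 1 - c * Real.sqrt (1 - x ^ 2) := by
    intro x
    have h1 : Real.sqrt (1 - x ^ 2) ≤ 1 := Real.sqrt_le_one.mpr (by nlinarith)
    have h2 : 0 ≤ Real.sqrt (1 - x ^ 2) := Real.sqrt_nonneg _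
    nlinarith
  -- continuity
  have hcont : Continuous fun r : ℝ =>
      Real.arctan (c * r / (1 - c * Real.sqrt (1 - r ^ 2))) -
        Real.arsinh (2 * c * r / (1 - c ^ 2)) := by
    apply Continuous.sub
    · exact Real.continuous_arctan.comp
        ((continuous_const.mul continuous_id).div
          (continuous_const.sub (continuous_const.mul
            (Real.continuous_sqrt.comp (continuous_const.sub (continuous_pow 2)))))
          fun x => (hdenpos x).ne')
    · exact Real.continuous_arsinh.comp
        ((continuous_const.mul continuous_id).div_const (1 - c ^ 2))
  -- derivative negative
  have hderiv : ∀ x ∈ Set.Ioo (0:ℝ) 1, deriv (fun r : ℝ =>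
      Real.arctan (c * r / (1 - c * Real.sqrt (1 - r ^ 2))) -
        Real.arsinh (2 * c * r / (1 - c ^ 2))) x < 0 := by
    intro x hx
    obtain ⟨hx0, hx1⟩ := hx
    have hd := aux_deriv c hc0 hc1 x hx0 hx1
    rw [hd.deriv]
    have h1r : (0:ℝ) < 1 - x ^ 2 := by nlinarith
    have hs0 : 0 < Real.sqrt (1 - x ^ 2) := Real.sqrt_pos.2 h1r
    have hs2 : Real.sqrt (1 - x ^ 2) ^ 2 = 1 - x ^ 2 := Real.sq_sqrt h1r.le
    have hs1 : Real.sqrt (1 - x ^ 2) < 1 := by nlinarith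
    have hWpos : (0:ℝ) < (1 + c ^ 2) ^ 2 - (2 * c * Real.sqrt (1 - x ^ 2)) ^ 2 := by
      nlinarith
    have hW0 : 0 < Real.sqrt ((1 + c ^ 2) ^ 2 - (2 * c * Real.sqrt (1 - x ^ 2)) ^ 2) :=
      Real.sqrt_pos.2 hWpos
    have hW2 : Real.sqrt ((1 + c ^ 2) ^ 2 - (2 * c * Real.sqrt (1 - x ^ 2)) ^ 2) ^ 2 =
        (1 + c ^ 2) ^ 2 - (2 * c * Real.sqrt (1 - x ^ 2)) ^ 2 := Real.sq_sqrt hWpos.le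
    have hsw : Real.sqrt (1 + (2 * c * x / (1 - c ^ 2)) ^ 2) =
        Real.sqrt ((1 + c ^ 2) ^ 2 - (2 * c * Real.sqrt (1 - x ^ 2)) ^ 2) / (1 - c ^ 2) := by
      rw [show 1 + (2 * c * x / (1 - c ^ 2)) ^ 2 =
          (Real.sqrt ((1 + c ^ 2) ^ 2 - (2 * c * Real.sqrt (1 - x ^ 2)) ^ 2) / (1 - c ^ 2)) ^ 2 by
        rw [div_pow, div_pow, hW2]; field_simp; linear_combination (4 * c ^ 2) * hs2]
      exact Real.sqrt_sq (by positivity)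
    rw [hsw]
    exact aux_ineq c x (Real.sqrt (1 - x ^ 2))
      (Real.sqrt ((1 + c ^ 2) ^ 2 - (2 * c * Real.sqrt (1 - x ^ 2)) ^ 2))
      hc0 hc1 hx0 hs0 hs1 hs2 hW0 hW2
  have hanti : StrictAntiOn (fun r : ℝ =>
      Real.arctan (c * r / (1 - c * Real.sqrt (1 - r ^ 2))) -
        Real.arsinh (2 * c * r / (1 - c ^ 2))) (Set.Ioo 0 1) := by
    apply strictAntiOn_of_deriv_neg (convex_Ioo 0 1) hcont.continuousOn
    intro x hx
    rw [interior_Ioo] at hx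
    exact hderiv x hx
  -- limit at 0
  have hlim0 : Filter.Tendsto (fun r : ℝ =>
      Real.arctan (c * r / (1 - c * Real.sqrt (1 - r ^ 2))) -
        Real.arsinh (2 * c * r / (1 - c ^ 2))) (nhdsWithin 0 (Set.Ioi 0)) (nhds 0) := by
    have h0 : Real.arctan (c * 0 / (1 - c * Real.sqrt (1 - 0 ^ 2))) -
        Real.arsinh (2 * c * 0 / (1 - c ^ 2)) = 0 := by norm_num
    have := (hcont.tendsto 0).mono_left (nhdsWithin_le_nhds (s := Set.Ioi (0:ℝ)))
    rwa [h0] at this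
  -- limit at 1
  have hlim1 : Filter.Tendsto (fun r : ℝ =>
      Real.arctan (c * r / (1 - c * Real.sqrt (1 - r ^ 2))) -
        Real.arsinh (2 * c * r / (1 - c ^ 2))) (nhdsWithin 1 (Set.Iio 1))
      (nhds (Real.arctan c - Real.log ((1 + c) / (1 - c)))) := by
    have h1 : Real.arctan (c * 1 / (1 - c * Real.sqrt (1 - 1 ^ 2))) -
        Real.arsinh (2 * c * 1 / (1 - c ^ 2)) =
        Real.arctan c - Real.log ((1 + c) / (1 - c)) := by
      rw [show (1:ℝ) - 1 ^ 2 = 0 by norm_num, Real.sqrt_zero]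
      norm_num
      rw [Real.arsinh]
      have hsq : Real.sqrt (1 + (2 * c / (1 - c ^ 2)) ^ 2) = (1 + c ^ 2) / (1 - c ^ 2) := by
        rw [show 1 + (2 * c / (1 - c ^ 2)) ^ 2 = ((1 + c ^ 2) / (1 - c ^ 2)) ^ 2 by
          field_simp; ring]
        exact Real.sqrt_sq (by positivity)
      rw [hsq, show 2 * c / (1 - c ^ 2) + (1 + c ^ 2) / (1 - c ^ 2) = (1 + c) / (1 - c) by
        rw [← add_div, div_eq_div_iff (by nlinarith) (by nlinarith)]; ring]
    have := (hcont.tendsto 1).mono_left (nhdsWithin_le_nhds (s := Set.Iio (1:ℝ)))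
    rwa [h1] at this
  refine ⟨hanti, hlim0, hlim1, ?_⟩
  -- negativity
  have hle : ∀ t ∈ Set.Ioo (0:ℝ) 1, (fun r : ℝ =>
      Real.arctan (c * r / (1 - c * Real.sqrt (1 - r ^ 2))) -
        Real.arsinh (2 * c * r / (1 - c ^ 2))) t ≤ 0 := by
    intro t ht
    refine ge_of_tendsto hlim0 ?_
    filter_upwards [Ioo_mem_nhdsGT_of_mem (Set.mem_Ico.mpr ⟨le_refl (0:ℝ), ht.1⟩)] with x hx
    exact (hanti ⟨hx.1, hx.2.trans ht.2⟩ ht hx.2).le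
  intro r hr
  have hmem : r / 2 ∈ Set.Ioo (0:ℝ) 1 := ⟨by linarith [hr.1], by linarith [hr.1, hr.2]⟩
  exact lt_of_lt_of_le (hanti hmem hr (by linarith [hr.1])) (hle (r / 2) hmem)
end

section
/- The function f₄(r) = arctan(r) / arcosh(1 + 2·r²) is strictly decreasing on (0,∞), with limit 1/2 as r → 0⁺ and limit 0 as r → ∞; in particular 0 < f₄(r) < 1/2 for all r ∈ (0,∞). -/
open Real Set Filter

/-- Inverse hyperbolic cosine. -/
noncomputable def arcosh (t : ℝ) : ℝ := Real.log (t + Real.sqrt (t ^ 2 - 1))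

lemma arcosh_eq (r : ℝ) (hr : 0 ≤ r) : _root_.arcosh (1 + 2 * r ^ 2) = 2 * Real.arsinh r := by
  have hs : Real.sqrt (1 + r ^ 2) ^ 2 = 1 + r ^ 2 := Real.sq_sqrt (by positivity)
  have h1 : (1 + 2 * r ^ 2) ^ 2 - 1 = (2 * r * Real.sqrt (1 + r ^ 2)) ^ 2 := by nlinarith
  have h2 : Real.sqrt ((1 + 2 * r ^ 2) ^ 2 - 1) = 2 * r * Real.sqrt (1 + r ^ 2) := by
    rw [h1]; exact Real.sqrt_sq (by positivity)
  have h3 : 1 + 2 * r ^ 2 + 2 * r * Real.sqrt (1 + r ^ 2) = (r + Real.sqrt (1 + r ^ 2)) ^ 2 := by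
    nlinarith
  rw [_root_.arcosh, h2, h3, Real.log_pow, Real.arsinh]
  push_cast; ring

lemma key_ineq : ∀ x ∈ Set.Ioi (0:ℝ), Real.arsinh x < Real.sqrt (1 + x ^ 2) * Real.arctan x := by
  have hmono : StrictMonoOn (fun x => Real.sqrt (1 + x ^ 2) * Real.arctan x - Real.arsinh x)
      (Set.Ici 0) := by
    apply strictMonoOn_of_deriv_pos (convex_Ici 0)
    · exact (((continuous_const.add (continuous_pow 2)).sqrt.mul Real.continuous_arctan).sub
        Real.continuous_arsinh).continuousOn
    · intro x hx
      rw [interior_Ici] at hx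
      have h2 : (0:ℝ) < 1 + x ^ 2 := by positivity
      have hs : 0 < Real.sqrt (1 + x ^ 2) := Real.sqrt_pos.mpr h2
      have hss : Real.sqrt (1 + x ^ 2) ^ 2 = 1 + x ^ 2 := Real.sq_sqrt h2.le
      have hd1 : HasDerivAt (fun x : ℝ => Real.sqrt (1 + x ^ 2))
          (2 * x / (2 * Real.sqrt (1 + x ^ 2))) x := by
        have : HasDerivAt (fun x : ℝ => 1 + x ^ 2) (2 * x) x := by
          simpa using ((hasDerivAt_pow 2 x).const_add 1)
        exact this.sqrt (by positivity)
      have hd : HasDerivAt (fun x => Real.sqrt (1 + x ^ 2) * Real.arctan x - Real.arsinh x)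
          ((2 * x / (2 * Real.sqrt (1 + x ^ 2))) * Real.arctan x
            + Real.sqrt (1 + x ^ 2) * (1 / (1 + x ^ 2)) - (Real.sqrt (1 + x ^ 2))⁻¹) x :=
        ((hd1.mul (Real.hasDerivAt_arctan x))).sub (Real.hasDerivAt_arsinh x)
      rw [hd.deriv]
      have harc : 0 < Real.arctan x := by simpa using Real.arctan_strictMono (Set.mem_Ioi.mp hx)
      have he : Real.sqrt (1 + x ^ 2) * (1 / (1 + x ^ 2)) = (Real.sqrt (1 + x ^ 2))⁻¹ := by
        rw [← hss]; field_simp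
        rw [Real.sqrt_sq hs.le]
      rw [he]
      have : 0 < 2 * x / (2 * Real.sqrt (1 + x ^ 2)) * Real.arctan x := by
        apply mul_pos (div_pos (by linarith [Set.mem_Ioi.mp hx]) (by positivity)) harc
      linarith
  intro x hx
  have := hmono (Set.self_mem_Ici) (le_of_lt (Set.mem_Ioi.mp hx)) (Set.mem_Ioi.mp hx)
  simpa [Real.arsinh_zero] using this

theorem stmt16 (f : ℝ → ℝ)
    (hf : ∀ r : ℝ, f r = Real.arctan r / _root_.arcosh (1 + 2 * r ^ 2)) :
    StrictAntiOn f (Set.Ioi 0) ∧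
    Filter.Tendsto f (nhdsWithin 0 (Set.Ioi 0)) (nhds (1 / 2)) ∧
    Filter.Tendsto f Filter.atTop (nhds 0) ∧
    ∀ r ∈ Set.Ioi (0 : ℝ), 0 < f r ∧ f r < 1 / 2 := by
  set g : ℝ → ℝ := fun r => Real.arctan r / (2 * Real.arsinh r) with hg
  have hfg : ∀ r > (0:ℝ), f r = g r := by
    intro r hr; rw [hf r, arcosh_eq r hr.le]
  -- strict anti for g
  have hganti : StrictAntiOn g (Set.Ioi 0) := by
    apply strictAntiOn_of_deriv_neg (convex_Ioi 0)
    · apply ContinuousOn.div Real.continuous_arctan.continuousOn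
        (continuous_const.mul Real.continuous_arsinh).continuousOn
      intro x hx
      have : 0 < Real.arsinh x := Real.arsinh_pos_iff.mpr (Set.mem_Ioi.mp hx)
      exact (mul_pos two_pos this).ne'
    · intro x hx
      rw [interior_Ioi] at hx
      have hx0 : (0:ℝ) < x := hx
      have h2 : (0:ℝ) < 1 + x ^ 2 := by positivity
      have hs : 0 < Real.sqrt (1 + x ^ 2) := Real.sqrt_pos.mpr h2
      have hss : Real.sqrt (1 + x ^ 2) ^ 2 = 1 + x ^ 2 := Real.sq_sqrt h2.le
      have hap : 0 < Real.arsinh x := Real.arsinh_pos_iff.mpr hx0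
      have hd : HasDerivAt g
          ((1 / (1 + x ^ 2) * (2 * Real.arsinh x)
            - Real.arctan x * (2 * (Real.sqrt (1 + x ^ 2))⁻¹)) / (2 * Real.arsinh x) ^ 2) x := by
        exact (Real.hasDerivAt_arctan x).div ((Real.hasDerivAt_arsinh x).const_mul 2)
          (by positivity)
      rw [hd.deriv]
      apply div_neg_of_neg_of_pos _ (by positivity)
      have hk := key_ineq x hx
      have hmul := mul_lt_mul_of_pos_right hk hs
      rw [sub_neg, show Real.arctan x * (2 * (Real.sqrt (1 + x ^ 2))⁻¹)
          = (2 * Real.arctan x) / Real.sqrt (1 + x ^ 2) by ring,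
        show 1 / (1 + x ^ 2) * (2 * Real.arsinh x) = (2 * Real.arsinh x) / (1 + x ^ 2) by ring,
        div_lt_div_iff₀ h2 hs]
      nlinarith
  have hfanti : StrictAntiOn f (Set.Ioi 0) := by
    intro a ha b hb hab
    rw [hfg a ha, hfg b hb]; exact hganti ha hb hab
  -- limit at 0+
  have hlim0 : Filter.Tendsto f (nhdsWithin 0 (Set.Ioi 0)) (nhds (1 / 2)) := by
    have ha : Tendsto (slope Real.arctan 0) (nhdsWithin 0 {(0:ℝ)}ᶜ) (nhds 1) := by
      have := (hasDerivAt_iff_tendsto_slope).mp (Real.hasDerivAt_arctan 0)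
      simpa using this
    have hb : Tendsto (slope Real.arsinh 0) (nhdsWithin 0 {(0:ℝ)}ᶜ) (nhds 1) := by
      have := (hasDerivAt_iff_tendsto_slope).mp (Real.hasDerivAt_arsinh 0)
      simpa using this
    have hcomb : Tendsto (fun r => slope Real.arctan 0 r / (2 * slope Real.arsinh 0 r))
        (nhdsWithin 0 {(0:ℝ)}ᶜ) (nhds (1 / (2 * 1))) :=
      ha.div (hb.const_mul 2) (by norm_num)
    have hsub : nhdsWithin (0:ℝ) (Set.Ioi 0) ≤ nhdsWithin 0 {(0:ℝ)}ᶜ :=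
      nhdsWithin_mono 0 (fun x hx => ne_of_gt hx)
    have : Tendsto (fun r => slope Real.arctan 0 r / (2 * slope Real.arsinh 0 r))
        (nhdsWithin (0:ℝ) (Set.Ioi 0)) (nhds (1/2)) := by
      simpa using hcomb.mono_left hsub
    refine this.congr' ?_
    filter_upwards [self_mem_nhdsWithin] with r hr
    have hr0 : (0:ℝ) < r := hr
    rw [hfg r hr0, hg]
    simp only [slope_def_field, Real.arctan_zero, Real.arsinh_zero, sub_zero]
    field_simp
  -- limit at atTop
  have hlimtop : Filter.Tendsto f Filter.atTop (nhds 0) := by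
    have hnum : Tendsto Real.arctan atTop (nhds (π / 2)) :=
      Real.tendsto_arctan_atTop.mono_right nhdsWithin_le_nhds
    have hden : Tendsto (fun r => 2 * Real.arsinh r) atTop atTop := by
      apply Filter.Tendsto.const_mul_atTop two_pos
      apply tendsto_atTop_atTop_of_monotone Real.arsinh_strictMono.monotone
      intro b; exact ⟨Real.sinh b, by rw [Real.arsinh_sinh]⟩
    have := hnum.div_atTop hden
    refine this.congr' ?_
    filter_upwards [eventually_gt_atTop (0:ℝ)] with r hr
    exact (hfg r hr).symm
  refine ⟨hfanti, hlim0, hlimtop, ?_⟩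
  intro r hr
  have hr0 : (0:ℝ) < r := hr
  constructor
  · -- 0 < f r : via f (r+1) ≥ 0 and anti
    have h1 : f (r + 1) < f r := hfanti hr (by simp; linarith) (by linarith)
    have h2 : (0:ℝ) ≤ f (r + 1) := by
      apply le_of_tendsto hlimtop
      filter_upwards [eventually_gt_atTop (r + 1)] with t ht
      exact le_of_lt (hfanti (by simp; linarith) (by simp; linarith) ht)
    linarith
  · have h1 : f r < f (r / 2) := hfanti (by simp; linarith) hr (by linarith)
    have h2 : f (r / 2) ≤ 1 / 2 := by
      apply ge_of_tendsto hlim0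
      filter_upwards [Ioo_mem_nhdsGT_of_mem (show (0:ℝ) ∈ Set.Ico 0 (r/2) from ⟨le_refl 0, by linarith⟩)] with t ht
      exact le_of_lt (hfanti ht.1 (by simp; linarith) ht.2)
    linarith
end

section
/- Identify ℝ² with ℂ. Let a ∈ B² \ {0}, let r = 1 − |a|, let z = a/|a| (the point where the circle C = {w ∈ ℂ : |w−a| = r} is internally tangent to the unit circle), and let α ∈ (0,π). Suppose x, y, x', y' ∈ C \ {z} satisfy ∠(x,z,y) = ∠(x',z,y') = α and |x'| = |y'|. Then (1−|x|²)·(1−|y|²) ≤ (1−|x'|²)·(1−|y'|²). -/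
open EuclideanGeometry Real Set

lemma stmt18_chord (p1 p2 q1 q2 m1 m2 : ℝ)
    (hp : (p1 - m1) ^ 2 + (p2 - m2) ^ 2 = m1 ^ 2 + m2 ^ 2)
    (hq : (q1 - m1) ^ 2 + (q2 - m2) ^ 2 = m1 ^ 2 + m2 ^ 2) :
    ((p1 - q1) ^ 2 + (p2 - q2) ^ 2) * ((p1 ^ 2 + p2 ^ 2) * (q1 ^ 2 + q2 ^ 2)) =
      4 * (m1 ^ 2 + m2 ^ 2) * (p1 * q2 - p2 * q1) ^ 2 := by
  linear_combination
    (-4*q2^2*m2^2 + q2^4 + -4*q1*q2^2*m1 + 4*q1^2*m1^2 + 2*q1^2*q2^2 + -4*q1^3*m1 + q1^4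
      + 2*p2*q2^2*m2 + -2*p2*q2^3 + 2*p2*q1^2*m2 + -2*p2*q1^2*q2 + p2^2*q2^2 + p2^2*q1^2
      + 2*p1*q2^2*m1 + -2*p1*q1*q2^2 + 2*p1*q1^2*m1 + -2*p1*q1^3 + p1^2*q2^2 + p1^2*q1^2) * hp
    + (4*p2*q2*m2^2 + 2*p2*q2^2*m2 + -4*p2*q1*m1*m2 + 2*p2*q1^2*m2 + -4*p2^2*q2*m2
      + 4*p2^2*q1*m1 + 4*p1*q2*m1*m2 + 2*p1*q2^2*m1 + -4*p1*q1*m1^2 + 2*p1*q1^2*m1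
      + -4*p1*p2*q2*m1 + -4*p1*p2*q1*m2) * hq

/-- For two points `w, v` on the circle of center `a`, radius `1 - t` (`t = |a|`),
distinct from the tangency point `z = a/t`, with angle `α` at `z`:
`N_w² + N_v² - 2 cos α N_w N_v = 4 t² (1-t)² (1 - cos² α)` where `N_w = |t w - a| = t|w - z|`. -/
lemma stmt18_pair (t : ℝ) (ht0 : 0 < t) (c : ℝ) (a w v : ℂ)
    (hta : t ^ 2 = a.re ^ 2 + a.im ^ 2)
    (hw : (w.re - a.re) ^ 2 + (w.im - a.im) ^ 2 = (1 - t) ^ 2)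
    (hv : (v.re - a.re) ^ 2 + (v.im - a.im) ^ 2 = (1 - t) ^ 2)
    (hw0 : w ≠ a / (t : ℂ)) (hv0 : v ≠ a / (t : ℂ))
    (hcos : Real.cos (InnerProductGeometry.angle (w - a / (t : ℂ)) (v - a / (t : ℂ))) = c) :
    ‖(t : ℂ) * w - a‖ ^ 2 + ‖(t : ℂ) * v - a‖ ^ 2
      - 2 * c * (‖(t : ℂ) * w - a‖ * ‖(t : ℂ) * v - a‖)
      = 4 * t ^ 2 * (1 - t) ^ 2 * (1 - c ^ 2) := by
  have ht' : (t : ℂ) ≠ 0 := by exact_mod_cast ht0.ne'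
  set z : ℂ := a / (t : ℂ) with hz
  have hscale : ∀ u : ℂ, (t : ℂ) * (u - z) = (t : ℂ) * u - a := by
    intro u; rw [hz]; field_simp
  -- norms
  set NW := ‖(t : ℂ) * w - a‖ with hNW
  set NV := ‖(t : ℂ) * v - a‖ with hNV
  have hNWt : NW = t * ‖w - z‖ := by
    rw [hNW, ← hscale, norm_mul, Complex.norm_of_nonneg ht0.le]
  have hNVt : NV = t * ‖v - z‖ := by
    rw [hNV, ← hscale, norm_mul, Complex.norm_of_nonneg ht0.le]
  have hWne : (t : ℂ) * w - a ≠ 0 := by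
    rw [← hscale]; exact mul_ne_zero ht' (sub_ne_zero.mpr hw0)
  have hVne : (t : ℂ) * v - a ≠ 0 := by
    rw [← hscale]; exact mul_ne_zero ht' (sub_ne_zero.mpr hv0)
  have hNWpos : 0 < NW := norm_pos_iff.mpr hWne
  have hNVpos : 0 < NV := norm_pos_iff.mpr hVne
  -- cosine relation
  have hcos2 : Real.cos (InnerProductGeometry.angle (w - z) (v - z))
      * (‖w - z‖ * ‖v - z‖) = inner ℝ (w - z) (v - z) :=
    InnerProductGeometry.cos_angle_mul_norm_mul_norm _ _
  rw [hcos, Complex.inner] at hcos2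
  -- convert to scaled coordinates
  have hinner : c * (NW * NV)
      = ((t:ℂ)*w - a).re * ((t:ℂ)*v - a).re + ((t:ℂ)*w - a).im * ((t:ℂ)*v - a).im := by
    have hre : ∀ u : ℂ, ((t:ℂ)*u - a).re = t * (u - z).re := by
      intro u; rw [← hscale]; simp
    have him : ∀ u : ℂ, ((t:ℂ)*u - a).im = t * (u - z).im := by
      intro u; rw [← hscale]; simp
    rw [hre, hre, him, him, hNWt, hNVt]
    have h6 : ((v - z) * (starRingEnd ℂ) (w - z)).re
        = (w - z).re * (v - z).re + (w - z).im * (v - z).im := by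
      simp [Complex.mul_re]; ring
    rw [h6] at hcos2
    linear_combination t^2 * hcos2
  -- coordinates of scaled points
  have hWre : ((t:ℂ)*w - a).re = t * w.re - a.re := by simp
  have hWim : ((t:ℂ)*w - a).im = t * w.im - a.im := by simp
  have hVre : ((t:ℂ)*v - a).re = t * v.re - a.re := by simp
  have hVim : ((t:ℂ)*v - a).im = t * v.im - a.im := by simp
  -- squared norms in coordinates
  have hSW : NW ^ 2 = (t * w.re - a.re) ^ 2 + (t * w.im - a.im) ^ 2 := by
    rw [hNW, Complex.sq_norm, Complex.normSq_apply, hWre, hWim]; ring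
  have hSV : NV ^ 2 = (t * v.re - a.re) ^ 2 + (t * v.im - a.im) ^ 2 := by
    rw [hNV, Complex.sq_norm, Complex.normSq_apply, hVre, hVim]; ring
  -- circle membership for chord lemma, center m = (t-1)•a
  have hcw : ((t*w.re - a.re) - (t-1)*a.re) ^ 2 + ((t*w.im - a.im) - (t-1)*a.im) ^ 2
      = ((t-1)*a.re) ^ 2 + ((t-1)*a.im) ^ 2 := by
    linear_combination t^2 * hw + (t-1)^2 * hta
  have hcv : ((t*v.re - a.re) - (t-1)*a.re) ^ 2 + ((t*v.im - a.im) - (t-1)*a.im) ^ 2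
      = ((t-1)*a.re) ^ 2 + ((t-1)*a.im) ^ 2 := by
    linear_combination t^2 * hv + (t-1)^2 * hta
  have hchord := stmt18_chord (t*w.re - a.re) (t*w.im - a.im) (t*v.re - a.re) (t*v.im - a.im)
    ((t-1)*a.re) ((t-1)*a.im) hcw hcv
  -- |m|² = (t-1)² t²
  have hm : ((t-1)*a.re) ^ 2 + ((t-1)*a.im) ^ 2 = (t-1)^2 * t^2 := by
    linear_combination (t-1)^2 * hta.symm
  rw [hm] at hchord
  -- Lagrange: cross² = SW·SV - inner²
  have hlag : ((t*w.re - a.re) * (t*v.im - a.im) - (t*w.im - a.im) * (t*v.re - a.re)) ^ 2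
      = ((t*w.re - a.re)^2 + (t*w.im - a.im)^2) * ((t*v.re - a.re)^2 + (t*v.im - a.im)^2)
        - ((t*w.re - a.re)*(t*v.re - a.re) + (t*w.im - a.im)*(t*v.im - a.im)) ^ 2 := by
    ring
  rw [hlag] at hchord
  -- substitute inner and norms
  rw [hWre, hWim, hVre, hVim] at hinner
  have hD : ((t*w.re - a.re) - (t*v.re - a.re)) ^ 2 + ((t*w.im - a.im) - (t*v.im - a.im)) ^ 2
      = NW^2 + NV^2 - 2*c*(NW*NV) := by
    linear_combination -hSW - hSV + 2*hinner
  rw [← hSW, ← hSV, ← hinner, hD] at hchord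
  have h2 : (NW^2 + NV^2 - 2*c*(NW*NV)) * (NW^2*NV^2)
      = (4*t^2*(1-t)^2*(1-c^2)) * (NW^2*NV^2) := by linear_combination hchord
  exact mul_right_cancel₀ (by positivity) h2

/-- Key identity lemma wrapper and main theorem. -/
lemma stmt18_keyc (wr wi ar ai t : ℝ) (hta : t ^ 2 = ar ^ 2 + ai ^ 2)
    (hw : (wr - ar) ^ 2 + (wi - ai) ^ 2 = (1 - t) ^ 2) :
    (1 - t) * (1 - (wr ^ 2 + wi ^ 2)) * t = (t * wr - ar) ^ 2 + (t * wi - ai) ^ 2 := by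
  linear_combination (-t) * hw + (1 - t) * hta

theorem stmt18 (a : ℂ) (ha : a ∈ Metric.ball (0 : ℂ) 1) (ha0 : a ≠ 0)
    (α : ℝ) (hα : α ∈ Set.Ioo 0 π) (x y x' y' : ℂ)
    (hx : x ∈ Metric.sphere a (1 - ‖a‖))
    (hy : y ∈ Metric.sphere a (1 - ‖a‖))
    (hx' : x' ∈ Metric.sphere a (1 - ‖a‖))
    (hy' : y' ∈ Metric.sphere a (1 - ‖a‖))
    (hxz : x ≠ a / (‖a‖ : ℂ)) (hyz : y ≠ a / (‖a‖ : ℂ))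
    (hx'z : x' ≠ a / (‖a‖ : ℂ)) (hy'z : y' ≠ a / (‖a‖ : ℂ))
    (hang : EuclideanGeometry.angle x (a / (‖a‖ : ℂ)) y = α)
    (hang' : EuclideanGeometry.angle x' (a / (‖a‖ : ℂ)) y' = α)
    (hsym : ‖x'‖ = ‖y'‖) :
    (1 - ‖x‖ ^ 2) * (1 - ‖y‖ ^ 2) ≤
      (1 - ‖x'‖ ^ 2) * (1 - ‖y'‖ ^ 2) := by
  have ht0 : 0 < ‖a‖ := norm_pos_iff.mpr ha0
  have ht1 : ‖a‖ < 1 := by simpa [Complex.dist_eq] using Metric.mem_ball.mp ha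
  set t := ‖a‖ with hdeft
  have ht' : (t : ℂ) ≠ 0 := by exact_mod_cast ht0.ne'
  have hr0 : 0 < 1 - t := by linarith
  have hta : t ^ 2 = a.re ^ 2 + a.im ^ 2 := by
    rw [hdeft, Complex.sq_norm, Complex.normSq_apply]; ring
  -- sphere membership in coordinates
  have sph : ∀ w : ℂ, w ∈ Metric.sphere a (1 - t) →
      (w.re - a.re) ^ 2 + (w.im - a.im) ^ 2 = (1 - t) ^ 2 := by
    intro w hw
    have h : ‖w - a‖ = 1 - t := by
      rw [Metric.mem_sphere, Complex.dist_eq] at hw; exact hw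
    have h2 := congrArg (· ^ 2) h
    rw [Complex.sq_norm, Complex.normSq_apply] at h2
    simp only [Complex.sub_re, Complex.sub_im] at h2
    linear_combination h2
  -- key identity for each point
  have key : ∀ w : ℂ, w ∈ Metric.sphere a (1 - t) →
      (1 - t) * (1 - ‖w‖ ^ 2) * t = ‖(t : ℂ) * w - a‖ ^ 2 := by
    intro w hw
    have h1 := stmt18_keyc w.re w.im a.re a.im t hta (sph w hw)
    have h2 : ‖w‖ ^ 2 = w.re ^ 2 + w.im ^ 2 := by
      rw [Complex.sq_norm, Complex.normSq_apply]; ring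
    have hre : ((t : ℂ) * w - a).re = t * w.re - a.re := by simp
    have him : ((t : ℂ) * w - a).im = t * w.im - a.im := by simp
    rw [h2, Complex.sq_norm, Complex.normSq_apply, hre, him]
    linear_combination h1
  -- positivity of scaled norms
  have hpos : ∀ w : ℂ, w ≠ a / (t : ℂ) → 0 < ‖(t : ℂ) * w - a‖ := by
    intro w hw0
    have hscale : (t : ℂ) * (w - a / (t : ℂ)) = (t : ℂ) * w - a := by field_simp
    rw [← hscale]
    exact norm_pos_iff.mpr (mul_ne_zero ht' (sub_ne_zero.mpr hw0))
  set NX := ‖(t : ℂ) * x - a‖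
  set NY := ‖(t : ℂ) * y - a‖
  set NX' := ‖(t : ℂ) * x' - a‖
  set NY' := ‖(t : ℂ) * y' - a‖
  set c := Real.cos α with hc
  have hc1 : c < 1 := by
    have := Real.cos_lt_cos_of_nonneg_of_le_pi (le_refl 0) hα.2.le hα.1
    simpa [hc] using this
  have h1c : 0 < 1 - c := by linarith
  -- the two pair relations
  have hX : NX ^ 2 + NY ^ 2 - 2 * c * (NX * NY) = 4 * t ^ 2 * (1 - t) ^ 2 * (1 - c ^ 2) :=
    stmt18_pair t ht0 c a x y hta (sph x hx) (sph y hy) hxz hyz (by rw [hc, ← hang]; rfl)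
  have hX' : NX' ^ 2 + NY' ^ 2 - 2 * c * (NX' * NY') = 4 * t ^ 2 * (1 - t) ^ 2 * (1 - c ^ 2) :=
    stmt18_pair t ht0 c a x' y' hta (sph x' hx') (sph y' hy') hx'z hy'z (by rw [hc, ← hang']; rfl)
  -- symmetry of the primed pair
  have e3 := key x' hx'
  have e4 := key y' hy'
  have hsq : ‖x'‖ ^ 2 = ‖y'‖ ^ 2 := by rw [hsym]
  have hNsq : NX' ^ 2 = NY' ^ 2 := by linear_combination -e3 + e4 - (1 - t) * t * hsq
  have hsymN : NX' = NY' := (sq_eq_sq₀ (norm_nonneg _) (norm_nonneg _)).mp hNsq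
  rw [hsymN] at hX'
  have e : NY' ^ 2 * (1 - c) = (2 * t ^ 2 * (1 - t) ^ 2 * (1 + c)) * (1 - c) := by
    linear_combination hX' / 2
  have hNY'sq : NY' ^ 2 = 2 * t ^ 2 * (1 - t) ^ 2 * (1 + c) :=
    mul_right_cancel₀ (by linarith) e
  -- product bound
  have hNXpos := hpos x hxz
  have hNYpos := hpos y hyz
  have hprod : NX * NY ≤ NX' * NY' := by
    rw [hsymN, ← sq, hNY'sq]
    nlinarith [hX, sq_nonneg (NX - NY), mul_pos hNXpos hNYpos]
  -- assemble
  have e1 := key x hx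
  have e2 := key y hy
  have hsqle : (NX * NY) ^ 2 ≤ (NX' * NY') ^ 2 :=
    pow_le_pow_left₀ (by positivity) hprod 2
  have efin : ((1 - t) * t) ^ 2 * ((1 - ‖x‖ ^ 2) * (1 - ‖y‖ ^ 2))
      = (NX * NY) ^ 2 := by
    linear_combination ((1 - t) * (1 - ‖y‖ ^ 2) * t) * e1 + (NX ^ 2) * e2
  have efin' : ((1 - t) * t) ^ 2 * ((1 - ‖x'‖ ^ 2) * (1 - ‖y'‖ ^ 2))
      = (NX' * NY') ^ 2 := by
    linear_combination ((1 - t) * (1 - ‖y'‖ ^ 2) * t) * e3 + (NX' ^ 2) * e4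
  have hfinal : ((1 - t) * t) ^ 2 * ((1 - ‖x‖ ^ 2) * (1 - ‖y‖ ^ 2))
      ≤ ((1 - t) * t) ^ 2 * ((1 - ‖x'‖ ^ 2) * (1 - ‖y'‖ ^ 2)) := by
    rw [efin, efin']; exact hsqle
  exact le_of_mul_le_mul_left hfinal (pow_pos (mul_pos hr0 ht0) 2)
end

section
/- Identify ℝ² with ℂ. Let a ∈ ℂ with Im a > 0, let r = Im a, let z = Re a (the point where the circle C = {w ∈ ℂ : |w−a| = r} is tangent to the real axis), and let α ∈ (0,π). Suppose x, y, x', y' ∈ C \ {z} satisfy ∠(x,z,y) = ∠(x',z,y') = α and |x'−z| = |y'−z|. Then Im(x)·Im(y) ≤ Im(x')·Im(y'). -/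
open EuclideanGeometry Real Set

lemma circ_fact (a w : ℂ) (hw : w ∈ Metric.sphere a a.im) :
    (w.re - a.re)^2 + w.im^2 = 2 * a.im * w.im := by
  have h : dist w a = a.im := hw
  rw [Complex.dist_eq] at h
  have h2 : Complex.normSq (w - a) = a.im ^ 2 := by
    rw [← Complex.sq_norm, h]
  rw [Complex.normSq_apply] at h2
  simp only [Complex.sub_re, Complex.sub_im] at h2
  nlinarith [h2]

lemma im_pos (a w : ℂ) (ha : 0 < a.im) (hw : w ∈ Metric.sphere a a.im)
    (hwz : w ≠ (a.re : ℂ)) : 0 < w.im := by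
  have h := circ_fact a w hw
  rcases lt_or_ge 0 w.im with h1 | h1
  · exact h1
  · exfalso
    have him : w.im = 0 := by nlinarith [sq_nonneg (w.re - a.re), sq_nonneg w.im]
    have hre : w.re = a.re := by nlinarith [sq_nonneg w.im]
    exact hwz (Complex.ext hre (by simp [him]))

lemma inner_eq (z u v : ℂ) (α : ℝ)
    (hang : EuclideanGeometry.angle u z v = α) :
    (u.re - z.re) * (v.re - z.re) + (u.im - z.im) * (v.im - z.im)
      = ‖u - z‖ * ‖v - z‖ * Real.cos α := by
  have h := InnerProductGeometry.cos_angle_mul_norm_mul_norm (u -ᵥ z : ℂ) (v -ᵥ z)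
  rw [show InnerProductGeometry.angle (u -ᵥ z : ℂ) (v -ᵥ z)
      = EuclideanGeometry.angle u z v from rfl, hang] at h
  rw [Complex.inner] at h
  simp only [vsub_eq_sub] at h
  rw [show ‖u - z‖ = ‖u - z‖ from rfl,
    show ‖v - z‖ = ‖v - z‖ from rfl] at h
  have : ((v - z) * starRingEnd ℂ (u - z)).re
      = (u.re - z.re) * (v.re - z.re) + (u.im - z.im) * (v.im - z.im) := by
    simp [Complex.mul_re, Complex.conj_re, Complex.conj_im, Complex.sub_re, Complex.sub_im]
    ring
  rw [this] at h
  linarith [h]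

lemma aux_main (r c q t m : ℝ) (hr : 0 < r) (hq : 0 < q) (ht : 0 < t)
    (hc1 : c < 1) (hc2 : -1 ≤ c) (hm0 : 0 ≤ m)
    (hm2 : m^2 = (2*r*q)*(2*r*t))
    (key : m*c = r*(q+t) - 2*r^2*(1-c^2)) : q*t ≤ r^2*(1+c)^2 := by
  have hK : 0 < r*(q+t) := by positivity
  have hSm : m ≤ r*(q+t) := by nlinarith [sq_nonneg (q - t)]
  have hmle : m ≤ 2*r^2*(1+c) := by nlinarith
  have h1c : (0:ℝ) ≤ 1 + c := by linarith
  have hmm : m*m ≤ (2*r^2*(1+c))*(2*r^2*(1+c)) :=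
    mul_le_mul hmle hmle hm0 (by positivity)
  nlinarith [mul_pos hr hr]

set_option maxHeartbeats 1000000 in
theorem stmt19 (a : ℂ) (ha : 0 < a.im)
    (α : ℝ) (hα : α ∈ Set.Ioo 0 π) (x y x' y' : ℂ)
    (hx : x ∈ Metric.sphere a a.im)
    (hy : y ∈ Metric.sphere a a.im)
    (hx' : x' ∈ Metric.sphere a a.im)
    (hy' : y' ∈ Metric.sphere a a.im)
    (hxz : x ≠ (a.re : ℂ)) (hyz : y ≠ (a.re : ℂ))
    (hx'z : x' ≠ (a.re : ℂ)) (hy'z : y' ≠ (a.re : ℂ))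
    (hang : EuclideanGeometry.angle x ((a.re : ℂ)) y = α)
    (hang' : EuclideanGeometry.angle x' ((a.re : ℂ)) y' = α)
    (hsym : ‖x' - (a.re : ℂ)‖ = ‖y' - (a.re : ℂ)‖) :
    x.im * y.im ≤ x'.im * y'.im := by
  set r := a.im with hr
  set c := Real.cos α with hcdef
  obtain ⟨hα0, hαπ⟩ := hα
  have hc1 : c < 1 := by
    calc c = Real.cos α := rfl
    _ < 1 := by
      have := Real.cos_lt_cos_of_nonneg_of_le_pi le_rfl (le_of_lt hαπ) hα0
      simpa using this
  have hc2 : -1 ≤ c := Real.neg_one_le_cos α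
  -- circle facts
  have cx := circ_fact a x hx
  have cy := circ_fact a y hy
  have cx' := circ_fact a x' hx'
  have cy' := circ_fact a y' hy'
  have px := im_pos a x ha hx hxz
  have py := im_pos a y ha hy hyz
  have px' := im_pos a x' ha hx' hx'z
  have py' := im_pos a y' ha hy' hy'z
  -- abs squared facts
  have absq : ∀ w : ℂ, (‖w - (a.re : ℂ)‖)^2 = (w.re - a.re)^2 + w.im^2 := by
    intro w
    rw [Complex.sq_norm, Complex.normSq_apply]
    simp only [Complex.sub_re, Complex.sub_im, Complex.ofReal_re, Complex.ofReal_im, sub_zero]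
    ring
  -- inner equations
  have h1 := inner_eq (a.re : ℂ) x y α hang
  have h2 := inner_eq (a.re : ℂ) x' y' α hang'
  simp only [Complex.ofReal_re, Complex.ofReal_im, sub_zero] at h1 h2
  set m := ‖x - (a.re : ℂ)‖ * ‖y - (a.re : ℂ)‖ with hm
  set m' := ‖x' - (a.re : ℂ)‖ * ‖y' - (a.re : ℂ)‖ with hm'
  have hm2 : m^2 = (2 * r * x.im) * (2 * r * y.im) := by
    rw [hm, mul_pow, absq, absq, ← cx, ← cy]
  have hm'2 : m'^2 = (2 * r * x'.im) * (2 * r * y'.im) := by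
    rw [hm', mul_pow, absq, absq, ← cx', ← cy']
  have hmnn : 0 ≤ m := mul_nonneg (norm_nonneg _) (norm_nonneg _)
  have hm'nn : 0 ≤ m' := mul_nonneg (norm_nonneg _) (norm_nonneg _)
  -- symmetric case: q' = t' and m' = 2 r q'
  have hq't' : x'.im = y'.im := by
    have := absq x'
    have h4 := absq y'
    rw [hsym] at this
    have h5 : (2:ℝ) * r * x'.im = 2 * r * y'.im := by
      rw [← cx', ← cy', ← this, h4]
    have hr0 : (0:ℝ) < r := ha
    exact mul_left_cancel₀ (by positivity : (2:ℝ) * r ≠ 0) h5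
  have hmq' : m' = 2 * r * x'.im := by
    have hsq : m'^2 = (2 * r * x'.im)^2 := by rw [hm'2, hq't']; ring
    have h2r : (0:ℝ) ≤ 2 * r * x'.im := by positivity
    have hfac : (m' - 2 * r * x'.im) * (m' + 2 * r * x'.im) = 0 := by linear_combination hsq
    rcases mul_eq_zero.1 hfac with h | h
    · linarith
    · exfalso
      have hr0 : (0:ℝ) < r := ha
      have := mul_pos hr0 px'
      linarith
  -- derive q' = r (1 + c)
  have hps' : (x'.re - a.re) * (y'.re - a.re) = m' * c - x'.im * y'.im := by
    linarith [h2]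
  have hps'sq : ((x'.re - a.re) * (y'.re - a.re))^2
      = (2*r*x'.im - x'.im^2) * (2*r*y'.im - y'.im^2) := by
    have e1 : (x'.re - a.re)^2 = 2*r*x'.im - x'.im^2 := by linarith [cx']
    have e2 : (y'.re - a.re)^2 = 2*r*y'.im - y'.im^2 := by linarith [cy']
    rw [mul_pow, e1, e2]
  have hq'eq : x'.im = r * (1 + c) := by
    have key : (m' * c - x'.im * y'.im)^2 = (2*r*x'.im - x'.im^2) * (2*r*y'.im - y'.im^2) := by
      rw [← hps', hps'sq]
    rw [← hq't', hmq'] at key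
    -- (2 r q' c - q'^2)^2 = (2 r q' - q'^2)^2
    have hfac : (2*r*x'.im*c - x'.im^2 - (2*r*x'.im - x'.im^2))
        * (2*r*x'.im*c - x'.im^2 + (2*r*x'.im - x'.im^2)) = 0 := by
      linear_combination key
    rcases mul_eq_zero.1 hfac with h | h
    · exfalso
      have : 2*r*x'.im*(c-1) = 0 := by linarith
      have hr0 : (0:ℝ) < r := ha
      have : c - 1 = 0 := by
        rcases mul_eq_zero.1 this with h' | h'
        · exfalso
          have h2p := mul_pos (mul_pos (by norm_num : (0:ℝ) < 2) hr0) px'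
          linarith
        · exact h'
      linarith
    · have hr0 : (0:ℝ) < r := ha
      have hz : x'.im * (x'.im - r * (1 + c)) = 0 := by linear_combination (-(1:ℝ)/2) * h
      rcases mul_eq_zero.1 hz with h' | h'
      · linarith
      · linarith
  -- main inequality side
  have key : m * c = r * (x.im + y.im) - 2 * r^2 * (1 - c^2) := by
    have hps : (x.re - a.re) * (y.re - a.re) = m * c - x.im * y.im := by linarith [h1]
    have hpssq : (m * c - x.im * y.im)^2
        = (2*r*x.im - x.im^2) * (2*r*y.im - y.im^2) := by
      rw [← hps, mul_pow]
      have e1 : (x.re - a.re)^2 = 2*r*x.im - x.im^2 := by linarith [cx]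
      have e2 : (y.re - a.re)^2 = 2*r*y.im - y.im^2 := by linarith [cy]
      rw [e1, e2]
    have hqt : (0:ℝ) < x.im * y.im := mul_pos px py
    have hlin : 2 * (x.im * y.im) * (m * c)
        = 2 * (x.im * y.im) * (r * (x.im + y.im) - 2 * r^2 * (1 - c^2)) := by
      linear_combination (-1 : ℝ) * hpssq + c^2 * hm2
    exact mul_left_cancel₀ (by positivity) hlin
  have hr0 : (0:ℝ) < r := ha
  calc x.im * y.im ≤ r^2 * (1+c)^2 :=
        aux_main r c x.im y.im m hr0 px py hc1 hc2 hmnn hm2 key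
  _ = x'.im * y'.im := by rw [hq'eq, ← hq't', hq'eq]; ring
end
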